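/- Strip containment for VH-gadget channels (composite geometric statement underlying Lemmas 'connection-shadow' and 'VHgadget'): Let m be a real number with m ≥ 2, let y₀, y₁ ∈ [0, 1/m³], and let 0 ≤ h ≤ m⁸. If a point r of the plane lies on the line through (0, y₀) and (m⁶, y₁), i.e. r = (0, y₀) + t • ((m⁶, y₁) − (0, y₀)) for some real t, and r.1 = m⁶ + h, then |r.2 − 1/(2·m³)| < 3/(2·m). Hence every point of the funnel of the channel within distance m⁸ of its far side lies in a horizontal strip of width 3/m centered in the channel. -/

import Mathlib

/-- Strip containment for VH-gadget channels: any line through `(0, y₀)` and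
`(m⁶, y₁)` with `y₀, y₁ ∈ [0, 1/m³]` meets the vertical line `x = m⁶ + h`
(with `0 ≤ h ≤ m⁸` and `m ≥ 2`) within the horizontal strip of width `3/m`
centered in the channel. -/
theorem vh_channel_strip_containment
    (m y₀ y₁ h t : ℝ) (hm : 2 ≤ m)
    (hy₀ : y₀ ∈ Set.Icc (0 : ℝ) (1 / m ^ 3))
    (hy₁ : y₁ ∈ Set.Icc (0 : ℝ) (1 / m ^ 3))
    (hh : 0 ≤ h) (hh' : h ≤ m ^ 8)
    (r : ℝ × ℝ)
    (hr : r = ((0 : ℝ), y₀) + t • (((m ^ 6, y₁) : ℝ × ℝ) - ((0 : ℝ), y₀)))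
    (hr1 : r.1 = m ^ 6 + h) :
    |r.2 - 1 / (2 * m ^ 3)| < 3 / (2 * m) := by
  obtain ⟨hy₀0, hy₀1⟩ := hy₀
  obtain ⟨hy₁0, hy₁1⟩ := hy₁
  have hm0 : (0:ℝ) < m := by linarith
  have h1 : r.1 = t * m ^ 6 := by rw [hr]; simp [Prod.smul_def]
  have h2 : r.2 = y₀ + t * (y₁ - y₀) := by rw [hr]; simp [Prod.smul_def]
  have hm6 : (0:ℝ) < m ^ 6 := by positivity
  have ht : t * m ^ 6 = m ^ 6 + h := by rw [← h1, hr1]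
  have ht1 : 1 ≤ t := by nlinarith
  have ht2 : t ≤ 1 + m ^ 2 := by nlinarith
  have hA : (t - 1) * y₀ ≤ m ^ 2 * (1 / m ^ 3) :=
    mul_le_mul (by linarith) hy₀1 hy₀0 (by positivity)
  have hB : 0 ≤ (t - 1) * y₀ := mul_nonneg (by linarith) hy₀0
  have hC : t * y₁ ≤ (1 + m ^ 2) * (1 / m ^ 3) :=
    mul_le_mul ht2 hy₁1 hy₁0 (by positivity)
  have hD : 0 ≤ t * y₁ := mul_nonneg (by linarith) hy₁0
  have e1 : m ^ 2 * (1 / m ^ 3) = 1 / m := by field_simp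
  have e2 : (1 + m ^ 2) * (1 / m ^ 3) = 1 / m ^ 3 + 1 / m := by field_simp
  have hcmp : 1 / m ^ 3 < 1 / m := by
    apply one_div_lt_one_div_of_lt hm0
    nlinarith
  have hE : r.2 = t * y₁ - (t - 1) * y₀ := by rw [h2]; ring
  have h2m : (0:ℝ) < 2 * m := by linarith
  have hgoal1 : 3 / (2 * m) = 3 / 2 * (1 / m) := by ring
  have hgoal2 : 1 / (2 * m ^ 3) = 1 / 2 * (1 / m ^ 3) := by ring
  rw [abs_lt, hE, hgoal1, hgoal2]
  constructor <;> linarith [e1 ▸ hA, e2 ▸ hC]
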